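/- Let G = (V, E) be a finite directed graph without parallel arcs, let n = |V|, and let s_1, t_1, s_2, t_2 ∈ V. Let G' be the directed graph obtained from the 2-extension S_2(G) by adding two new vertices s_3 and t_3 together with the arcs (v, s_3) for every v ∈ V, the arc (s_3, t_3), and the arcs (t_3, t_1) and (t_3, t_2); all arcs of G' have length 1. Then G contains two arc-disjoint directed paths, one from s_1 to t_1 and one from s_2 to t_2, if and only if there exist directed walks W_1 from s_1 to t_1, W_2 from s_2 to t_2 and W_3 from s_3 to t_3 in G' that respect unit capacities and such that each W_i is a concatenation of at most n + 1 unique-shortest-path segments. -/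

import Mathlib

/-- Directed walks in the directed graph on `V` whose arcs are given by the relation `D`
(a directed graph without parallel arcs). -/
inductive DWalk {V : Type u} (D : V → V → Prop) : V → V → Type u
  | nil {v : V} : DWalk D v v
  | cons {u v w : V} (h : D u v) (p : DWalk D v w) : DWalk D u w

namespace DWalk

variable {V : Type*} {D : V → V → Prop}

/-- The number of arcs of a directed walk. -/
def length : ∀ {x y : V}, DWalk D x y → ℕ
  | _, _, .nil => 0
  | _, _, .cons _ p => p.length + 1

/-- The list of arcs traversed by a directed walk, in order (with multiplicity). -/
def darcs : ∀ {x y : V}, DWalk D x y → List (V × V)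
  | _, _, .nil => []
  | _, _, @DWalk.cons _ _ u v _ _ p => (u, v) :: p.darcs

/-- The list of vertices visited by a directed walk, in order. -/
def support : ∀ {x y : V}, DWalk D x y → List V
  | x, _, .nil => [x]
  | _, _, @DWalk.cons _ _ u _ _ _ p => u :: p.support

/-- Concatenation of directed walks. -/
def append : ∀ {x y z : V}, DWalk D x y → DWalk D y z → DWalk D x z
  | _, _, _, .nil, q => q
  | _, _, _, .cons h p, q => .cons h (p.append q)

/-- A directed walk is a (simple) directed path if it visits no vertex twice. -/
def IsPath {x y : V} (p : DWalk D x y) : Prop := p.support.Nodup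

end DWalk

/-- The distance from `x` to `y` in the digraph `D` (all arcs of length 1): the minimum
number of arcs of a directed walk from `x` to `y`. -/
noncomputable def ddist {V : Type*} (D : V → V → Prop) (x y : V) : ℕ :=
  sInf {n | ∃ p : DWalk D x y, p.length = n}

/-- `DConcatUSP D j w`: the directed walk `w` is a concatenation of (exactly) `j`
consecutive subwalks, each of which is the unique shortest directed path in `D` between
its endpoints. -/
inductive DConcatUSP {V : Type*} (D : V → V → Prop) : ℕ → ∀ {x y : V}, DWalk D x y → Prop
  | nil {x : V} : DConcatUSP D 0 (DWalk.nil : DWalk D x x)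
  | cons {j : ℕ} {x y z : V} (p : DWalk D x y) (q : DWalk D y z)
      (hp : p.length = ddist D x y)
      (hu : ∀ p' : DWalk D x y, p'.length = ddist D x y → p' = p)
      (hq : DConcatUSP D j q) : DConcatUSP D (j + 1) (p.append q)

/-- The number of occurrences of `a` in the list `l` (counted with multiplicity). -/
noncomputable def cnt {α : Type*} (a : α) (l : List α) : ℕ :=
  letI := Classical.decEq α
  l.count a

/-- The arc relation of the graph `G'` of Statement 7: it is obtained from the
2-extension `S₂(G)` of the digraph `G = (V, E)` (vertices `Sum.inl (Sum.inl v)` for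
`v ∈ V` and midpoints `Sum.inl (Sum.inr a)` for arcs `a ∈ E`) by adding two new vertices
`s₃ = Sum.inr false` and `t₃ = Sum.inr true`, together with the arcs `(v, s₃)` for all
`v ∈ V`, the arc `(s₃, t₃)`, and the arcs `(t₃, t₁)` and `(t₃, t₂)`. -/
def arcs7 {V : Type*} (E : V → V → Prop) (t₁ t₂ : V) :
    ((V ⊕ {a : V × V // E a.1 a.2}) ⊕ Bool) →
      ((V ⊕ {a : V × V // E a.1 a.2}) ⊕ Bool) → Prop
  | Sum.inl (Sum.inl u), Sum.inl (Sum.inr a) => (a : V × V).1 = u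
  | Sum.inl (Sum.inr a), Sum.inl (Sum.inl v) => (a : V × V).2 = v
  | Sum.inl (Sum.inl _), Sum.inr false => True
  | Sum.inr false, Sum.inr true => True
  | Sum.inr true, Sum.inl (Sum.inl v) => v = t₁ ∨ v = t₂
  | _, _ => False

section AuxGeneric

variable {V : Type*} {D : V → V → Prop}

namespace DWalk

theorem darcs_append : ∀ {x y z : V} (p : DWalk D x y) (q : DWalk D y z),
    (p.append q).darcs = p.darcs ++ q.darcs
  | _, _, _, .nil, q => rfl
  | _, _, _, .cons h p, q => by simp [append, darcs, darcs_append p q]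

theorem start_mem_support : ∀ {x y : V} (p : DWalk D x y), x ∈ p.support
  | _, _, .nil => List.mem_singleton.2 rfl
  | _, _, .cons _ _ => List.mem_cons_self

theorem end_mem_support : ∀ {x y : V} (p : DWalk D x y), y ∈ p.support
  | _, _, .nil => List.mem_singleton.2 rfl
  | _, _, .cons _ p => List.mem_cons_of_mem _ (end_mem_support p)

theorem fst_mem_support : ∀ {x y : V} (p : DWalk D x y) {u v : V},
    (u, v) ∈ p.darcs → u ∈ p.support
  | _, _, .nil, _, _, h => by simp [darcs] at h
  | _, _, .cons _ p, u, v, h => by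
      rcases List.mem_cons.1 h with h | h
      · injection h with h1 h2
        rw [h1]; exact List.mem_cons_self
      · exact List.mem_cons_of_mem _ (fst_mem_support p h)

theorem rel_of_mem_darcs : ∀ {x y : V} (p : DWalk D x y) {u v : V},
    (u, v) ∈ p.darcs → D u v
  | _, _, .nil, _, _, h => by simp [darcs] at h
  | _, _, @DWalk.cons _ _ a b _ hab p, u, v, h => by
      rcases List.mem_cons.1 h with h | h
      · injection h with h1 h2; subst h1; subst h2; exact hab
      · exact rel_of_mem_darcs p h

theorem darcs_nodup : ∀ {x y : V} (p : DWalk D x y), p.IsPath → p.darcs.Nodup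
  | _, _, .nil, _ => List.nodup_nil
  | _, _, @DWalk.cons _ _ u v w hud p, hp => by
      have hsup : (u :: p.support).Nodup := hp
      rw [List.nodup_cons] at hsup
      refine List.nodup_cons.2 ⟨fun hmem => hsup.1 (fst_mem_support p hmem),
        darcs_nodup p hsup.2⟩

theorem length_support : ∀ {x y : V} (p : DWalk D x y), p.support.length = p.length + 1
  | _, _, .nil => rfl
  | _, _, .cons _ p => by simp [support, length, length_support p]

theorem ne_of_isPath_cons {u v w : V} (h : D u v) (p : DWalk D v w)
    (hp : (DWalk.cons h p).IsPath) : u ≠ v := by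
  have hsup : (u :: p.support).Nodup := hp
  rw [List.nodup_cons] at hsup
  intro huv
  exact hsup.1 (huv ▸ start_mem_support p)

theorem isPath_of_isPath_cons {u v w : V} {h : D u v} {p : DWalk D v w}
    (hp : (DWalk.cons h p).IsPath) : p.IsPath := by
  have hsup : (u :: p.support).Nodup := hp
  exact (List.nodup_cons.1 hsup).2

/-- Drop an initial portion of a walk up to a given vertex of its support. -/
theorem exists_path_from_mem_support : ∀ {v y : V} (p : DWalk D v y), p.IsPath →
    ∀ {x : V}, x ∈ p.support → ∃ r : DWalk D x y, r.IsPath ∧ ∀ a ∈ r.darcs, a ∈ p.darcs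
  | _, _, .nil, hp, x, hx => by
      obtain rfl : x = _ := List.mem_singleton.1 hx
      exact ⟨.nil, hp, fun a ha => ha⟩
  | _, _, @DWalk.cons _ _ u v w hud p, hp, x, hx => by
      rcases List.mem_cons.1 hx with rfl | hx
      · exact ⟨.cons hud p, hp, fun a ha => ha⟩
      · obtain ⟨r, hr, hsub⟩ :=
          exists_path_from_mem_support p (isPath_of_isPath_cons hp) hx
        exact ⟨r, hr, fun a ha => List.mem_cons_of_mem _ (hsub a ha)⟩

/-- Every walk contains a path between the same endpoints using a subset of its arcs. -/
theorem exists_path : ∀ {x y : V} (p : DWalk D x y),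
    ∃ q : DWalk D x y, q.IsPath ∧ ∀ a ∈ q.darcs, a ∈ p.darcs
  | _, _, .nil => ⟨.nil, List.nodup_singleton _, fun a ha => ha⟩
  | _, _, @DWalk.cons _ _ u v w hud p => by
      obtain ⟨q, hq, hsub⟩ := exists_path p
      by_cases hu : u ∈ q.support
      · obtain ⟨r, hr, hsub'⟩ := exists_path_from_mem_support q hq hu
        exact ⟨r, hr, fun a ha => List.mem_cons_of_mem _ (hsub a (hsub' a ha))⟩
      · refine ⟨.cons hud q, List.nodup_cons.2 ⟨hu, hq⟩, fun a ha => ?_⟩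
        rcases List.mem_cons.1 ha with rfl | ha
        · exact List.mem_cons_self
        · exact List.mem_cons_of_mem _ (hsub a ha)

end DWalk

theorem cnt_nil {α : Type*} (a : α) : cnt a ([] : List α) = 0 := by
  simp [cnt]

theorem cnt_cons_self {α : Type*} (a : α) (l : List α) :
    cnt a (a :: l) = cnt a l + 1 := by
  classical
  simp only [cnt]
  rw [List.count_cons]
  simp

theorem cnt_cons_of_ne {α : Type*} {a b : α} (h : a ≠ b) (l : List α) :
    cnt a (b :: l) = cnt a l := by
  classical
  simp only [cnt]
  rw [List.count_cons]
  have : ¬ (b = a) := fun e => h e.symm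
  simp [this]

theorem cnt_eq_zero {α : Type*} {a : α} {l : List α} (h : a ∉ l) : cnt a l = 0 := by
  classical
  simp only [cnt]
  exact List.count_eq_zero.2 h

theorem cnt_pos {α : Type*} {a : α} {l : List α} (h : a ∈ l) : 1 ≤ cnt a l := by
  classical
  simp only [cnt]
  exact List.count_pos_iff.2 h

theorem cnt_le_one_of_nodup {α : Type*} {l : List α} (h : l.Nodup) (a : α) :
    cnt a l ≤ 1 := by
  classical
  simp only [cnt]
  exact List.nodup_iff_count_le_one.1 h a

theorem cnt_le_cons {α : Type*} (a b : α) (l : List α) : cnt a l ≤ cnt a (b :: l) := by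
  classical
  by_cases h : a = b
  · subst h; rw [cnt_cons_self]; omega
  · rw [cnt_cons_of_ne h]

theorem ddist_eq {V : Type*} {D : V → V → Prop} {x y : V} {m : ℕ}
    (hm : ∃ p : DWalk D x y, p.length = m)
    (hlb : ∀ p : DWalk D x y, m ≤ p.length) : ddist D x y = m := by
  obtain ⟨p, hp⟩ := hm
  have hne : {n | ∃ p : DWalk D x y, p.length = n}.Nonempty := ⟨m, p, hp⟩
  have h1 : ddist D x y ≤ m := Nat.sInf_le ⟨p, hp⟩
  obtain ⟨q, hq⟩ := Nat.sInf_mem hne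
  have h2 : m ≤ sInf {n | ∃ p : DWalk D x y, p.length = n} := hq ▸ hlb q
  have h2' : m ≤ ddist D x y := h2
  omega

end AuxGeneric
section AuxUSP

variable {V : Type*} {D : V → V → Prop}

theorem ddist_one {x y : V} (h : D x y) (hne : x ≠ y) : ddist D x y = 1 := by
  refine ddist_eq ⟨.cons h .nil, rfl⟩ fun p => ?_
  cases p with
  | nil => exact absurd rfl hne
  | cons h' p' => simp [DWalk.length]

theorem length_one_eq {x y : V} (h : D x y) (p : DWalk D x y) (hp : p.length = 1) :
    p = .cons h .nil := by
  cases p with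
  | nil => simp [DWalk.length] at hp
  | cons h' p' =>
    cases p' with
    | nil => rfl
    | cons h'' p'' => simp [DWalk.length] at hp

theorem usp_arc {x y : V} (h : D x y) (hne : x ≠ y) :
    DConcatUSP D 1 (DWalk.cons h DWalk.nil : DWalk D x y) := by
  have hd := ddist_one h hne
  have := DConcatUSP.cons (DWalk.cons h DWalk.nil) DWalk.nil (by rw [hd]; rfl)
    (fun p' hp' => length_one_eq h p' (by rwa [hd] at hp')) DConcatUSP.nil
  exact this

end AuxUSP

section Aux7

variable {V : Type*} {E : V → V → Prop} {t₁ t₂ : V}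

/-- The subdivided arc `u → m_a → v` in `G'`. -/
def sub2 {u v : V} (h : E u v) :
    DWalk (arcs7 E t₁ t₂) (Sum.inl (Sum.inl u)) (Sum.inl (Sum.inl v)) :=
  .cons (show arcs7 E t₁ t₂ (Sum.inl (Sum.inl u)) (Sum.inl (Sum.inr ⟨(u, v), h⟩)) from rfl)
    (.cons (show arcs7 E t₁ t₂ (Sum.inl (Sum.inr ⟨(u, v), h⟩)) (Sum.inl (Sum.inl v)) from rfl)
      .nil)

theorem ddist_sub2 {u v : V} (h : E u v) (hne : u ≠ v) :
    ddist (arcs7 E t₁ t₂) (Sum.inl (Sum.inl u)) (Sum.inl (Sum.inl v)) = 2 := by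
  refine ddist_eq ⟨sub2 h, rfl⟩ fun p => ?_
  cases p with
  | nil => exact absurd rfl hne
  | cons h1 p1 =>
    cases p1 with
    | nil => exact h1.elim
    | cons h2 p2 => simp [DWalk.length]

theorem length_two_eq {u v : V} (h : E u v) (hne : u ≠ v)
    (p : DWalk (arcs7 E t₁ t₂) (Sum.inl (Sum.inl u)) (Sum.inl (Sum.inl v)))
    (hp : p.length = 2) : p = sub2 h := by
  cases p with
  | nil => exact absurd rfl hne
  | @cons _ z _ h1 p1 =>
    cases p1 with
    | nil => exact h1.elim
    | @cons _ z2 _ h2 p2 =>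
      cases p2 with
      | cons h3 p3 => simp [DWalk.length] at hp
      | nil =>
        rcases z with (w | a) | b
        · exact h2.elim
        · have ha : a = ⟨(u, v), h⟩ := Subtype.ext (Prod.ext h1 h2)
          subst ha
          rfl
        · cases b
          · exact h2.elim
          · exact h1.elim

theorem usp_sub2 {u v : V} (h : E u v) (hne : u ≠ v) :
    DConcatUSP (arcs7 E t₁ t₂) 1 (sub2 h) := by
  have hd := ddist_sub2 (t₁ := t₁) (t₂ := t₂) h hne
  have := DConcatUSP.cons (sub2 h) DWalk.nil (by rw [hd]; rfl)
    (fun p' hp' => length_two_eq h hne p' (by rwa [hd] at hp')) DConcatUSP.nil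
  exact this

/-- The subdivision of a walk of `G` into a walk of `G'`. -/
def subdiv : ∀ {x y : V}, DWalk E x y →
    DWalk (arcs7 E t₁ t₂) (Sum.inl (Sum.inl x)) (Sum.inl (Sum.inl y))
  | _, _, .nil => .nil
  | _, _, .cons h p => (sub2 h).append (subdiv p)

theorem subdiv_length : ∀ {x y : V} (p : DWalk E x y),
    (subdiv (t₁ := t₁) (t₂ := t₂) p).length = 2 * p.length
  | _, _, .nil => rfl
  | _, _, .cons h p => by
      show ((subdiv p).length + 1) + 1 = _
      rw [subdiv_length p]
      simp [DWalk.length]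
      ring

theorem usp_subdiv : ∀ {x y : V} (p : DWalk E x y), p.IsPath →
    DConcatUSP (arcs7 E t₁ t₂) p.length (subdiv p)
  | _, _, .nil, _ => .nil
  | _, _, .cons h p, hp => by
      have hne := DWalk.ne_of_isPath_cons h p hp
      have := DConcatUSP.cons (sub2 h) (subdiv p)
        (by rw [ddist_sub2 (t₁ := t₁) (t₂ := t₂) h hne]; rfl)
        (fun p' hp' => length_two_eq h hne p' (by rwa [ddist_sub2 h hne] at hp'))
        (usp_subdiv p (DWalk.isPath_of_isPath_cons hp))
      exact this

theorem mem_subdiv_darcs : ∀ {x y : V} (p : DWalk E x y)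
    {e : ((V ⊕ {a : V × V // E a.1 a.2}) ⊕ Bool) × ((V ⊕ {a : V × V // E a.1 a.2}) ⊕ Bool)},
    e ∈ (subdiv (t₁ := t₁) (t₂ := t₂) p).darcs →
    ∃ (u v : V) (h : E u v), (u, v) ∈ p.darcs ∧
      (e = (Sum.inl (Sum.inl u), Sum.inl (Sum.inr ⟨(u, v), h⟩)) ∨
       e = (Sum.inl (Sum.inr ⟨(u, v), h⟩), Sum.inl (Sum.inl v)))
  | _, _, .nil, e, he => by simp [subdiv, DWalk.darcs] at he
  | _, _, @DWalk.cons _ _ u v w h p, e, he => by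
      have h0 : (subdiv (t₁ := t₁) (t₂ := t₂) (DWalk.cons h p)).darcs
          = (Sum.inl (Sum.inl u), Sum.inl (Sum.inr ⟨(u, v), h⟩))
            :: (Sum.inl (Sum.inr ⟨(u, v), h⟩), Sum.inl (Sum.inl v))
            :: (subdiv p).darcs := rfl
      rw [h0] at he
      rcases List.mem_cons.1 he with rfl | he
      · exact ⟨u, v, h, List.mem_cons_self, Or.inl rfl⟩
      rcases List.mem_cons.1 he with rfl | he
      · exact ⟨u, v, h, List.mem_cons_self, Or.inr rfl⟩
      · obtain ⟨u', v', h', hmem, hor⟩ := mem_subdiv_darcs p he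
        exact ⟨u', v', h', List.mem_cons_of_mem _ hmem, hor⟩

theorem nodup_subdiv_darcs : ∀ {x y : V} (p : DWalk E x y), p.darcs.Nodup →
    (subdiv (t₁ := t₁) (t₂ := t₂) p).darcs.Nodup
  | _, _, .nil, _ => List.nodup_nil
  | _, _, @DWalk.cons _ _ u v w h p, hnd => by
      have hnd' : (u, v) ∉ p.darcs ∧ p.darcs.Nodup := List.nodup_cons.1 hnd
      have h0 : (subdiv (t₁ := t₁) (t₂ := t₂) (DWalk.cons h p)).darcs
          = (Sum.inl (Sum.inl u), Sum.inl (Sum.inr ⟨(u, v), h⟩))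
            :: (Sum.inl (Sum.inr ⟨(u, v), h⟩), Sum.inl (Sum.inl v))
            :: (subdiv p).darcs := rfl
      rw [h0]
      refine List.nodup_cons.2 ⟨?_, List.nodup_cons.2 ⟨?_, nodup_subdiv_darcs p hnd'.2⟩⟩
      · intro hmem
        rcases List.mem_cons.1 hmem with heq | hmem
        · simp at heq
        · obtain ⟨u', v', h', hm, hor⟩ := mem_subdiv_darcs p hmem
          rcases hor with heq | heq
          · obtain ⟨h1, h2⟩ := Prod.mk.injEq _ _ _ _ ▸ heq
            injection h2 with h2
            injection h2 with h2
            have : ((u, v) : V × V) = (u', v') := congrArg Subtype.val h2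
            injection this with e1 e2
            exact hnd'.1 (e1 ▸ e2 ▸ hm)
          · simp at heq
      · intro hmem
        obtain ⟨u', v', h', hm, hor⟩ := mem_subdiv_darcs p hmem
        rcases hor with heq | heq
        · simp at heq
        · obtain ⟨h1, h2⟩ := Prod.mk.injEq _ _ _ _ ▸ heq
          injection h1 with h1
          injection h1 with h1
          have : ((u, v) : V × V) = (u', v') := congrArg Subtype.val h1
          injection this with e1 e2
          exact hnd'.1 (e1 ▸ e2 ▸ hm)

theorem subdiv_disjoint {x y x' y' : V} (p : DWalk E x y) (q : DWalk E x' y')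
    (hdisj : ∀ a, a ∈ p.darcs → a ∉ q.darcs)
    {e : ((V ⊕ {a : V × V // E a.1 a.2}) ⊕ Bool) × ((V ⊕ {a : V × V // E a.1 a.2}) ⊕ Bool)}
    (hep : e ∈ (subdiv (t₁ := t₁) (t₂ := t₂) p).darcs)
    (heq : e ∈ (subdiv (t₁ := t₁) (t₂ := t₂) q).darcs) : False := by
  obtain ⟨u, v, h, hm, hor⟩ := mem_subdiv_darcs p hep
  obtain ⟨u', v', h', hm', hor'⟩ := mem_subdiv_darcs q heq
  rcases hor with rfl | rfl <;> rcases hor' with heq' | heq'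
  · obtain ⟨h1, h2⟩ := Prod.mk.injEq _ _ _ _ ▸ heq'
    injection h2 with h2; injection h2 with h2
    have : ((u, v) : V × V) = (u', v') := congrArg Subtype.val h2
    injection this with e1 e2
    exact hdisj _ hm (e1 ▸ e2 ▸ hm')
  · obtain ⟨h1, h2⟩ := Prod.mk.injEq _ _ _ _ ▸ heq'
    simp at h1
  · obtain ⟨h1, h2⟩ := Prod.mk.injEq _ _ _ _ ▸ heq'
    simp at h1
  · obtain ⟨h1, h2⟩ := Prod.mk.injEq _ _ _ _ ▸ heq'
    injection h1 with h1; injection h1 with h1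
    have : ((u, v) : V × V) = (u', v') := congrArg Subtype.val h1
    injection this with e1 e2
    exact hdisj _ hm (e1 ▸ e2 ▸ hm')

theorem subdiv_ne_special {x y : V} (p : DWalk E x y)
    {e : ((V ⊕ {a : V × V // E a.1 a.2}) ⊕ Bool) × ((V ⊕ {a : V × V // E a.1 a.2}) ⊕ Bool)}
    (hep : e ∈ (subdiv (t₁ := t₁) (t₂ := t₂) p).darcs) :
    e ≠ ((Sum.inr false : (V ⊕ {a : V × V // E a.1 a.2}) ⊕ Bool), Sum.inr true) := by
  obtain ⟨u, v, h, hm, hor⟩ := mem_subdiv_darcs p hep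
  rcases hor with rfl | rfl <;> simp

end Aux7
section AuxProj

variable {V : Type*} {E : V → V → Prop} {t₁ t₂ : V}

theorem w3_mem (W : DWalk (arcs7 E t₁ t₂) (Sum.inr false) (Sum.inr true)) :
    ((Sum.inr false : (V ⊕ {a : V × V // E a.1 a.2}) ⊕ Bool), Sum.inr true) ∈ W.darcs := by
  cases W with
  | @cons _ z _ h1 W1 =>
    rcases z with (w | a) | b
    · exact h1.elim
    · exact h1.elim
    · cases b
      · exact h1.elim
      · exact List.mem_cons_self

theorem proj_aux : ∀ (n : ℕ) {x y : V}
    (W : DWalk (arcs7 E t₁ t₂) (Sum.inl (Sum.inl x)) (Sum.inl (Sum.inl y))),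
    W.length ≤ n →
    ((Sum.inr false : (V ⊕ {a : V × V // E a.1 a.2}) ⊕ Bool), Sum.inr true) ∉ W.darcs →
    ∃ p : DWalk E x y, ∀ (u v : V) (h : E u v),
      cnt ((u, v) : V × V) p.darcs ≤
        cnt ((Sum.inl (Sum.inl u) : (V ⊕ {a : V × V // E a.1 a.2}) ⊕ Bool),
          (Sum.inl (Sum.inr ⟨(u, v), h⟩) : (V ⊕ {a : V × V // E a.1 a.2}) ⊕ Bool)) W.darcs := by
  intro n
  induction n with
  | zero =>
    intro x y W hlen havoid
    cases W with
    | nil => exact ⟨.nil, fun u v h => (cnt_nil _).le.trans (Nat.zero_le _)⟩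
    | cons h1 W1 => simp [DWalk.length] at hlen
  | succ n ih =>
    intro x y W hlen havoid
    cases W with
    | nil => exact ⟨.nil, fun u v h => (cnt_nil _).le.trans (Nat.zero_le _)⟩
    | @cons _ z _ h1 W1 =>
      rcases z with (w | a) | b
      · exact h1.elim
      · -- first step goes to midpoint `a`; h1 : a.val.1 = x
        cases W1 with
        | @cons _ z2 _ h2 W2 =>
          rcases z2 with (w2 | a2) | b2
          · -- h2 : a.val.2 = w2
            subst h2
            have hlen2 : W2.length ≤ n := by
              simp [DWalk.length] at hlen; omega
            have havoid2 :
                ((Sum.inr false : (V ⊕ {a : V × V // E a.1 a.2}) ⊕ Bool), Sum.inr true)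
                  ∉ W2.darcs :=
              fun hm => havoid (List.mem_cons_of_mem _ (List.mem_cons_of_mem _ hm))
            obtain ⟨p, hp⟩ := ih W2 hlen2 havoid2
            have hx : E x a.val.2 := by
              have := a.prop; rwa [h1] at this
            refine ⟨.cons hx p, fun u v h => ?_⟩
            show cnt ((u, v) : V × V) ((x, a.val.2) :: p.darcs)
              ≤ cnt ((Sum.inl (Sum.inl u) : (V ⊕ {a : V × V // E a.1 a.2}) ⊕ Bool),
                  (Sum.inl (Sum.inr ⟨(u, v), h⟩) : (V ⊕ {a : V × V // E a.1 a.2}) ⊕ Bool))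
                ((Sum.inl (Sum.inl x), Sum.inl (Sum.inr a))
                  :: (Sum.inl (Sum.inr a), Sum.inl (Sum.inl a.val.2)) :: W2.darcs)
            by_cases hc : ((u, v) : V × V) = (x, a.val.2)
            · injection hc with e1 e2
              subst e1; subst e2
              have ha : a = ⟨(u, a.val.2), h⟩ := Subtype.ext (Prod.ext h1 rfl)
              rw [← ha, cnt_cons_self]
              have h5 := hp u a.val.2 h
              rw [← ha] at h5
              have h6 := cnt_le_cons
                ((Sum.inl (Sum.inl u) : (V ⊕ {a : V × V // E a.1 a.2}) ⊕ Bool),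
                  (Sum.inl (Sum.inr a) : (V ⊕ {a : V × V // E a.1 a.2}) ⊕ Bool))
                (Sum.inl (Sum.inr a), Sum.inl (Sum.inl a.val.2)) W2.darcs
              have h7 := cnt_cons_self
                ((Sum.inl (Sum.inl u) : (V ⊕ {a : V × V // E a.1 a.2}) ⊕ Bool),
                  (Sum.inl (Sum.inr a) : (V ⊕ {a : V × V // E a.1 a.2}) ⊕ Bool))
                ((Sum.inl (Sum.inr a), Sum.inl (Sum.inl a.val.2)) :: W2.darcs)
              rw [h7]
              omega
            · rw [cnt_cons_of_ne hc]
              have h5 := hp u v h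
              have h6 := cnt_le_cons
                ((Sum.inl (Sum.inl u) : (V ⊕ {a : V × V // E a.1 a.2}) ⊕ Bool),
                  (Sum.inl (Sum.inr ⟨(u, v), h⟩) : (V ⊕ {a : V × V // E a.1 a.2}) ⊕ Bool))
                (Sum.inl (Sum.inr a), Sum.inl (Sum.inl a.val.2)) W2.darcs
              have h7 := cnt_le_cons
                ((Sum.inl (Sum.inl u) : (V ⊕ {a : V × V // E a.1 a.2}) ⊕ Bool),
                  (Sum.inl (Sum.inr ⟨(u, v), h⟩) : (V ⊕ {a : V × V // E a.1 a.2}) ⊕ Bool))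
                (Sum.inl (Sum.inl x), Sum.inl (Sum.inr a))
                ((Sum.inl (Sum.inr a), Sum.inl (Sum.inl a.val.2)) :: W2.darcs)
              omega
          · exact h2.elim
          · cases b2
            · exact h2.elim
            · exact h2.elim
      · cases b
        · -- first step goes to s₃; the next arc must be (s₃, t₃), contradicting `havoid`
          cases W1 with
          | @cons _ z2 _ h2 W2 =>
            rcases z2 with (w2 | a2) | b2
            · exact h2.elim
            · exact h2.elim
            · cases b2
              · exact h2.elim
              · exact absurd (List.mem_cons_of_mem _ (List.mem_cons_self)) havoid
        · exact h1.elim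

end AuxProj
/-- `G` contains two arc-disjoint directed paths `s₁ → t₁` and `s₂ → t₂`
iff in `G'` there are directed walks `W₁ : s₁ → t₁`, `W₂ : s₂ → t₂`, `W₃ : s₃ → t₃`
respecting unit capacities, each a concatenation of at most `n + 1` unique-shortest-path
segments (where `n = |V|`). -/
theorem stmt7 {V : Type*} [Fintype V] (E : V → V → Prop) (s₁ t₁ s₂ t₂ : V) :
    (∃ (p : DWalk E s₁ t₁) (q : DWalk E s₂ t₂),
      p.IsPath ∧ q.IsPath ∧ ∀ a, a ∈ p.darcs → a ∉ q.darcs) ↔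
    (∃ (W₁ : DWalk (arcs7 E t₁ t₂) (Sum.inl (Sum.inl s₁)) (Sum.inl (Sum.inl t₁)))
       (W₂ : DWalk (arcs7 E t₁ t₂) (Sum.inl (Sum.inl s₂)) (Sum.inl (Sum.inl t₂)))
       (W₃ : DWalk (arcs7 E t₁ t₂) (Sum.inr false) (Sum.inr true)),
      (∀ a, cnt a W₁.darcs + cnt a W₂.darcs + cnt a W₃.darcs ≤ 1) ∧
      (∃ j ≤ Fintype.card V + 1, DConcatUSP (arcs7 E t₁ t₂) j W₁) ∧
      (∃ j ≤ Fintype.card V + 1, DConcatUSP (arcs7 E t₁ t₂) j W₂) ∧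
      (∃ j ≤ Fintype.card V + 1, DConcatUSP (arcs7 E t₁ t₂) j W₃)) := by
  constructor
  · rintro ⟨p, q, hp, hq, hdisj⟩
    refine ⟨subdiv p, subdiv q,
      .cons (show arcs7 E t₁ t₂ (Sum.inr false) (Sum.inr true) from trivial) .nil,
      ?_, ?_, ?_, ?_⟩
    · intro e
      classical
      show cnt e (subdiv p).darcs + cnt e (subdiv q).darcs
          + cnt e [((Sum.inr false : (V ⊕ {a : V × V // E a.1 a.2}) ⊕ Bool), Sum.inr true)]
        ≤ 1
      have hnp := nodup_subdiv_darcs (t₁ := t₁) (t₂ := t₂) p (DWalk.darcs_nodup p hp)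
      have hnq := nodup_subdiv_darcs (t₁ := t₁) (t₂ := t₂) q (DWalk.darcs_nodup q hq)
      rcases Classical.em (e ∈ (subdiv (t₁ := t₁) (t₂ := t₂) p).darcs) with h1 | h1
      · have c1 := cnt_le_one_of_nodup hnp e
        have c2 : cnt e (subdiv (t₁ := t₁) (t₂ := t₂) q).darcs = 0 :=
          cnt_eq_zero fun h2 => subdiv_disjoint p q hdisj h1 h2
        have c3 : cnt e
            [((Sum.inr false : (V ⊕ {a : V × V // E a.1 a.2}) ⊕ Bool), Sum.inr true)] = 0 :=
          cnt_eq_zero fun hm => subdiv_ne_special p h1 (List.mem_singleton.1 hm)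
        omega
      · have c1 : cnt e (subdiv (t₁ := t₁) (t₂ := t₂) p).darcs = 0 := cnt_eq_zero h1
        rcases Classical.em (e ∈ (subdiv (t₁ := t₁) (t₂ := t₂) q).darcs) with h2 | h2
        · have c2 := cnt_le_one_of_nodup hnq e
          have c3 : cnt e
              [((Sum.inr false : (V ⊕ {a : V × V // E a.1 a.2}) ⊕ Bool), Sum.inr true)] = 0 :=
            cnt_eq_zero fun hm => subdiv_ne_special q h2 (List.mem_singleton.1 hm)
          omega
        · have c2 : cnt e (subdiv (t₁ := t₁) (t₂ := t₂) q).darcs = 0 := cnt_eq_zero h2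
          have c3 := cnt_le_one_of_nodup
            (List.nodup_singleton
              ((Sum.inr false : (V ⊕ {a : V × V // E a.1 a.2}) ⊕ Bool), Sum.inr true)) e
          omega
    · refine ⟨p.length, ?_, usp_subdiv p hp⟩
      have h1 := DWalk.length_support p
      have h2 : p.support.length ≤ Fintype.card V := List.Nodup.length_le_card hp
      omega
    · refine ⟨q.length, ?_, usp_subdiv q hq⟩
      have h1 := DWalk.length_support q
      have h2 : q.support.length ≤ Fintype.card V := List.Nodup.length_le_card hq
      omega
    · exact ⟨1, by omega, usp_arc _ (by simp)⟩
  · rintro ⟨W₁, W₂, W₃, hcap, -, -, -⟩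
    have hc3 := cnt_pos (w3_mem W₃)
    have hcapx := hcap ((Sum.inr false : (V ⊕ {a : V × V // E a.1 a.2}) ⊕ Bool), Sum.inr true)
    have hav1 : ((Sum.inr false : (V ⊕ {a : V × V // E a.1 a.2}) ⊕ Bool), Sum.inr true)
        ∉ W₁.darcs := fun hm => by have := cnt_pos hm; omega
    have hav2 : ((Sum.inr false : (V ⊕ {a : V × V // E a.1 a.2}) ⊕ Bool), Sum.inr true)
        ∉ W₂.darcs := fun hm => by have := cnt_pos hm; omega
    obtain ⟨p₀, hp₀⟩ := proj_aux W₁.length W₁ le_rfl hav1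
    obtain ⟨q₀, hq₀⟩ := proj_aux W₂.length W₂ le_rfl hav2
    obtain ⟨p, hpP, hpsub⟩ := DWalk.exists_path p₀
    obtain ⟨q, hqP, hqsub⟩ := DWalk.exists_path q₀
    refine ⟨p, q, hpP, hqP, ?_⟩
    rintro ⟨u, v⟩ hap haq
    have h : E u v := DWalk.rel_of_mem_darcs p hap
    have c1 : 1 ≤ cnt ((u, v) : V × V) p₀.darcs := cnt_pos (hpsub _ hap)
    have c2 : 1 ≤ cnt ((u, v) : V × V) q₀.darcs := cnt_pos (hqsub _ haq)
    have e1 := hp₀ u v h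
    have e2 := hq₀ u v h
    have e3 := hcap ((Sum.inl (Sum.inl u) : (V ⊕ {a : V × V // E a.1 a.2}) ⊕ Bool),
      (Sum.inl (Sum.inr ⟨(u, v), h⟩) : (V ⊕ {a : V × V // E a.1 a.2}) ⊕ Bool))
    omega
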